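/- Dualization of the robust polytopic safety constraints (used in the paper's Theorem 1, following the dualization of robust linear constraints): let m n p : ℕ, let G : Matrix (Fin m) (Fin n) ℝ, F : Matrix (Fin p) (Fin n) ℝ, h : Fin m → ℝ, f : Fin p → ℝ, and suppose the polytope P = {ν : Fin n → ℝ | F.mulVec ν ≤ f componentwise} is nonempty and bounded. Then the following are equivalent: (i) for every ν ∈ P, G.mulVec ν ≤ h componentwise; (ii) there exists Z : Matrix (Fin p) (Fin m) ℝ with 0 ≤ Z i j for all i j, Zᵀ.mulVec f ≤ h componentwise, and G = Zᵀ * F. -/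

import Mathlib

open Matrix Finset

/-! Auxiliary: Carathéodory for finitely generated cones. -/

section Caratheodory

variable {κ : Type*} [Fintype κ] [DecidableEq κ] {E : Type*} [AddCommGroup E] [Module ℝ E]

lemma cone_reduce (v : κ → E) (s : Finset κ) (c : κ → ℝ)
    (hc : ∀ i, 0 ≤ c i) (hsupp : ∀ i ∉ s, c i = 0)
    (G : κ → ℝ) (hGs : ∀ i ∉ s, G i = 0) (hrel : ∑ i, G i • v i = 0)
    (i₁ : κ) (hi₁ : i₁ ∈ s) (hpos : 0 < G i₁) :
    ∃ i₀ ∈ s, ∃ c' : κ → ℝ, (∀ i, 0 ≤ c' i) ∧ (∀ i ∉ s.erase i₀, c' i = 0) ∧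
      ∑ i, c' i • v i = ∑ i, c i • v i := by
  classical
  set T : Finset κ := s.filter (fun i => 0 < G i) with hT
  have hTne : T.Nonempty := ⟨i₁, by simp [hT, hi₁, hpos]⟩
  obtain ⟨i₀, hi₀T, hmin⟩ := T.exists_min_image (fun i => c i / G i) hTne
  have hi₀s : i₀ ∈ s := (mem_filter.mp hi₀T).1
  have hGi₀ : 0 < G i₀ := (mem_filter.mp hi₀T).2
  set t : ℝ := c i₀ / G i₀ with ht
  have ht0 : 0 ≤ t := div_nonneg (hc i₀) hGi₀.le
  refine ⟨i₀, hi₀s, fun i => c i - t * G i, ?_, ?_, ?_⟩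
  · intro i
    show 0 ≤ c i - t * G i
    by_cases hi : 0 < G i
    · by_cases his : i ∈ s
      · have h1 : t ≤ c i / G i := hmin i (mem_filter.mpr ⟨his, hi⟩)
        have h2 := (le_div_iff₀ hi).mp h1
        linarith
      · rw [hGs i his] at hi; exact absurd hi (lt_irrefl 0)
    · push_neg at hi
      nlinarith [hc i, mul_nonneg ht0 (neg_nonneg.mpr hi)]
  · intro i hi
    rw [Finset.mem_erase] at hi
    push_neg at hi
    show c i - t * G i = 0
    by_cases hii : i = i₀
    · subst hii
      rw [ht, div_mul_cancel₀ _ (ne_of_gt hGi₀), sub_self]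
    · rw [hsupp i (hi hii), hGs i (hi hii)]; ring
  · have : ∑ i, (c i - t * G i) • v i = ∑ i, c i • v i - t • ∑ i, G i • v i := by
      rw [Finset.smul_sum, ← Finset.sum_sub_distrib]
      congr 1; ext i; rw [sub_smul, ← smul_smul]
    rw [this, hrel, smul_zero, sub_zero]

lemma cone_caratheodory (v : κ → E) (b : E)
    (hb : ∃ c : κ → ℝ, (∀ i, 0 ≤ c i) ∧ b = ∑ i, c i • v i) :
    ∃ (s : Finset κ) (c : κ → ℝ), (∀ i, 0 ≤ c i) ∧ (∀ i ∉ s, c i = 0) ∧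
      LinearIndependent ℝ (fun i : s => v i) ∧ b = ∑ i, c i • v i := by
  classical
  obtain ⟨c, hc, hbc⟩ := hb
  suffices H : ∀ (N : ℕ) (s : Finset κ) (c : κ → ℝ), s.card ≤ N → (∀ i, 0 ≤ c i) →
      (∀ i ∉ s, c i = 0) →
      ∃ (s' : Finset κ) (c' : κ → ℝ), (∀ i, 0 ≤ c' i) ∧ (∀ i ∉ s', c' i = 0) ∧
        LinearIndependent ℝ (fun i : s' => v i) ∧ ∑ i, c' i • v i = ∑ i, c i • v i by
    obtain ⟨s', c', h1, h2, h3, h4⟩ := H (Finset.univ.card) Finset.univ c (le_refl _) hc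
      (fun i hi => absurd (Finset.mem_univ i) hi)
    exact ⟨s', c', h1, h2, h3, by rw [hbc, ← h4]⟩
  intro N
  induction N with
  | zero =>
    intro s c hcard hc hsupp
    have hs : s = ∅ := Finset.card_eq_zero.mp (Nat.le_zero.mp hcard)
    subst hs
    refine ⟨∅, c, hc, hsupp, ?_, rfl⟩
    have : IsEmpty ((∅ : Finset κ) : Set κ) := by simp
    exact linearIndependent_empty_type
  | succ N ih =>
    intro s c hcard hc hsupp
    by_cases hli : LinearIndependent ℝ (fun i : s => v i)
    · exact ⟨s, c, hc, hsupp, hli, rfl⟩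
    · obtain ⟨g, hgrel, j, hgj⟩ := Fintype.not_linearIndependent_iff.mp hli
      set G : κ → ℝ := fun i => if h : i ∈ s then g ⟨i, h⟩ else 0 with hGdef
      have hGs : ∀ i ∉ s, G i = 0 := fun i hi => by simp [hGdef, hi]
      have hGrel : ∑ i, G i • v i = 0 := by
        rw [← Finset.sum_subset (Finset.subset_univ s)
          (fun i _ hi => by rw [hGs i hi, zero_smul])]
        rw [← Finset.sum_attach s (fun i => G i • v i)]
        convert hgrel using 1
        refine Finset.sum_congr rfl fun i _ => ?_
        simp [hGdef, i.2]
      have hGj : G (j : κ) = g j := by simp [hGdef, j.2]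
      have hred : ∃ i₀ ∈ s, ∃ c' : κ → ℝ, (∀ i, 0 ≤ c' i) ∧
          (∀ i ∉ s.erase i₀, c' i = 0) ∧ ∑ i, c' i • v i = ∑ i, c i • v i := by
        rcases lt_or_gt_of_ne hgj with hneg | hposs
        · refine cone_reduce v s c hc hsupp (fun i => -G i)
            (fun i hi => by simp [hGs i hi]) ?_ (j : κ) j.2 ?_
          · rw [← neg_zero, ← hGrel, ← Finset.sum_neg_distrib]
            exact Finset.sum_congr rfl fun i _ => by rw [neg_smul]
          · show 0 < -G (j : κ); rw [hGj]; linarith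
        · exact cone_reduce v s c hc hsupp G hGs hGrel (j : κ) j.2 (by rw [hGj]; exact hposs)
      obtain ⟨i₀, hi₀, c', hc', hsupp', hsum'⟩ := hred
      have hcard' : (s.erase i₀).card ≤ N := by
        have := Finset.card_erase_of_mem hi₀
        omega
      obtain ⟨s'', c'', h1, h2, h3, h4⟩ := ih (s.erase i₀) c' hcard' hc' hsupp'
      exact ⟨s'', c'', h1, h2, h3, by rw [h4, hsum']⟩

end Caratheodory

/-! Closedness of finitely generated cones and homogeneous Farkas lemma. -/

section FarkasCone

variable {ι κ : Type*} [Fintype ι] [Fintype κ] [DecidableEq κ]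

local notation "⟪" x ", " y "⟫_ℝ" => @inner ℝ _ _ x y

lemma isClosed_cone (v : κ → EuclideanSpace ℝ ι) :
    IsClosed {x : EuclideanSpace ℝ ι | ∃ c : κ → ℝ, (∀ i, 0 ≤ c i) ∧ x = ∑ i, c i • v i} := by
  classical
  have key : {x : EuclideanSpace ℝ ι | ∃ c : κ → ℝ, (∀ i, 0 ≤ c i) ∧ x = ∑ i, c i • v i} =
      ⋃ (s : Finset κ), ⋃ (_ : LinearIndependent ℝ (fun i : s => v i)),
        (Fintype.linearCombination ℝ (fun i : s => v i)) ''
          {c : s → ℝ | ∀ i, 0 ≤ c i} := by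
    ext x
    simp only [Set.mem_setOf_eq, Set.mem_iUnion, Set.mem_image]
    constructor
    · rintro hx
      obtain ⟨s, c, hc, hsupp, hli, hbc⟩ := cone_caratheodory v x hx
      refine ⟨s, hli, fun i => c i, fun i => hc i, ?_⟩
      rw [Fintype.linearCombination_apply, hbc]
      rw [← Finset.sum_subset (Finset.subset_univ s)
        (fun i _ hi => by rw [hsupp i hi, zero_smul])]
      rw [← Finset.sum_attach s (fun i => c i • v i)]
      rfl
    · rintro ⟨s, hli, c, hc, rfl⟩
      refine ⟨fun i => if h : i ∈ s then c ⟨i, h⟩ else 0, fun i => ?_, ?_⟩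
      · by_cases h : i ∈ s <;> simp [h, hc]
      · rw [Fintype.linearCombination_apply]
        rw [← Finset.sum_subset (Finset.subset_univ s)
          (fun i _ hi => by simp [hi])]
        rw [← Finset.sum_attach s (fun i => (if h : i ∈ s then c ⟨i, h⟩ else 0) • v i)]
        refine Finset.sum_congr rfl fun i _ => ?_
        simp [i.2]
  rw [key]
  refine isClosed_iUnion_of_finite fun s => ?_
  rw [Set.iUnion_eq_if]
  split_ifs with hli
  · have hinj : LinearMap.ker (Fintype.linearCombination ℝ (fun i : s => v i)) = ⊥ := by
      rw [LinearMap.ker_eq_bot']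
      intro g hg
      rw [Fintype.linearCombination_apply] at hg
      funext i
      exact Fintype.linearIndependent_iff.mp hli g hg i
    have hemb := LinearMap.isClosedEmbedding_of_injective hinj
    have hcl : IsClosed {c : {x // x ∈ s} → ℝ | ∀ i, 0 ≤ c i} := by
      have hh : {c : {x // x ∈ s} → ℝ | ∀ i, 0 ≤ c i} = ⋂ i, {c | 0 ≤ c i} := by
        ext; simp
      rw [hh]
      exact isClosed_iInter fun i => isClosed_le continuous_const (continuous_apply i)
    exact hemb.isClosedMap _ hcl
  · exact isClosed_empty

/-- Homogeneous Farkas lemma. -/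
lemma farkas_cone (v : κ → EuclideanSpace ℝ ι) (b : EuclideanSpace ℝ ι)
    (H : ∀ x : EuclideanSpace ℝ ι, (∀ i, ⟪v i, x⟫_ℝ ≤ 0) → ⟪b, x⟫_ℝ ≤ 0) :
    ∃ c : κ → ℝ, (∀ i, 0 ≤ c i) ∧ b = ∑ i, c i • v i := by
  classical
  by_contra hcon
  set K : ConvexCone ℝ (EuclideanSpace ℝ ι) :=
    { carrier := {x | ∃ c : κ → ℝ, (∀ i, 0 ≤ c i) ∧ x = ∑ i, c i • v i}
      smul_mem' := by
        rintro a ha x ⟨c, hc, rfl⟩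
        exact ⟨fun i => a * c i, fun i => mul_nonneg ha.le (hc i), by
          rw [Finset.smul_sum]; exact Finset.sum_congr rfl fun i _ => by
            show a • c i • v i = (a * c i) • v i
            rw [smul_smul]⟩
      add_mem' := by
        rintro x ⟨c, hc, rfl⟩ y ⟨d, hd, rfl⟩
        exact ⟨fun i => c i + d i, fun i => add_nonneg (hc i) (hd i), by
          rw [← Finset.sum_add_distrib]
          exact Finset.sum_congr rfl fun i _ => by
            show c i • v i + d i • v i = (c i + d i) • v i
            rw [add_smul]⟩ } with hK
  have hne : (K : Set (EuclideanSpace ℝ ι)).Nonempty :=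
    ⟨0, fun _ => 0, fun _ => le_refl 0, by simp⟩
  have hcl : IsClosed (K : Set (EuclideanSpace ℝ ι)) := isClosed_cone v
  have hbK : b ∉ K := hcon
  obtain ⟨y, hy1, hy2⟩ :=
    ProperCone.hyperplane_separation' (E := EuclideanSpace ℝ ι)
      ({ carrier := {x | ∃ c : κ → ℝ, (∀ i, 0 ≤ c i) ∧ x = ∑ i, c i • v i}
         add_mem' := fun ha hb => K.add_mem ha hb
         zero_mem' := ⟨fun _ => 0, fun _ => le_refl 0, by simp⟩
         smul_mem' := by
           rintro c x ⟨d, hd, rfl⟩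
           refine ⟨fun i => (c : ℝ) * d i, fun i => mul_nonneg c.2 (hd i), ?_⟩
           change (c : ℝ) • ∑ i, d i • v i = _
           rw [Finset.smul_sum]
           exact Finset.sum_congr rfl fun i _ => by simp [smul_smul]
         isClosed' := hcl } : ProperCone ℝ (EuclideanSpace ℝ ι)) (x₀ := b) hbK
  have hvy : ∀ i, ⟪v i, -y⟫_ℝ ≤ 0 := by
    intro i
    have hvi : v i ∈ K := ⟨fun j => if j = i then 1 else 0, fun j => by positivity, by simp⟩
    have := hy1 (v i) hvi
    rw [inner_neg_right]
    linarith
  have := H (-y) hvy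
  rw [inner_neg_right] at this
  linarith

end FarkasCone

section AffineFarkas

local notation "⟪" x ", " y "⟫_ℝ" => @inner ℝ _ _ x y


lemma eucl_sum_apply {ι : Type*} [Fintype ι] [DecidableEq ι] {κ : Type*} [Fintype κ]
    (v : κ → EuclideanSpace ℝ ι) (z : κ → ℝ) (k : ι) :
    (∑ i, z i • v i) k = ∑ i, z i * v i k := by
  have := map_sum (EuclideanSpace.proj k (𝕜 := ℝ)) (fun i => z i • v i) Finset.univ
  simp only [_root_.map_smul, smul_eq_mul] at this
  exact this

lemma affine_farkas {n p : ℕ} (F : Matrix (Fin p) (Fin n) ℝ) (f : Fin p → ℝ)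
    (g : Fin n → ℝ) (c : ℝ) (hne : ∃ ν : Fin n → ℝ, F.mulVec ν ≤ f)
    (H : ∀ ν : Fin n → ℝ, F.mulVec ν ≤ f → g ⬝ᵥ ν ≤ c) :
    ∃ z : Fin p → ℝ, (∀ i, 0 ≤ z i) ∧ f ⬝ᵥ z ≤ c ∧ ∀ k, g k = ∑ i, z i * F i k := by
  classical
  set v : (Fin p ⊕ Unit) → EuclideanSpace ℝ (Fin n ⊕ Unit) := Sum.elim
      (fun i => WithLp.toLp 2 (Sum.elim (fun k => F i k) (fun _ => -f i) : Fin n ⊕ Unit → ℝ))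
      (fun _ => WithLp.toLp 2 (Sum.elim (fun _ => 0) (fun _ => -1) : Fin n ⊕ Unit → ℝ)) with hv
  set b : EuclideanSpace ℝ (Fin n ⊕ Unit) :=
    WithLp.toLp 2 (Sum.elim (fun k => g k) (fun _ => -c) : Fin n ⊕ Unit → ℝ) with hb
  have hinner : ∀ (u x : EuclideanSpace ℝ (Fin n ⊕ Unit)), ⟪u, x⟫_ℝ =
      (∑ k : Fin n, u (Sum.inl k) * x (Sum.inl k)) + u (Sum.inr ()) * x (Sum.inr ()) := by
    intro u x
    rw [PiLp.inner_apply, Fintype.sum_sum_type]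
    simp [RCLike.inner_apply, mul_comm]
  have key : ∀ x : EuclideanSpace ℝ (Fin n ⊕ Unit),
      (∀ i, ⟪v i, x⟫_ℝ ≤ 0) → ⟪b, x⟫_ℝ ≤ 0 := by
    intro x hx
    set ν : Fin n → ℝ := fun k => x (Sum.inl k) with hν
    set t : ℝ := x (Sum.inr ()) with htdef
    have hxt : 0 ≤ t := by
      have h0 := hx (Sum.inr ())
      rw [hinner] at h0
      simp only [hv, Sum.elim_inr, Sum.elim_inl] at h0
      simp at h0
      linarith
    have hFν : ∀ i, F.mulVec ν i ≤ f i * t := by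
      intro i
      have h0 := hx (Sum.inl i)
      rw [hinner] at h0
      simp only [hv, Sum.elim_inl, Sum.elim_inr] at h0
      have heq : F.mulVec ν i = ∑ k : Fin n, F i k * ν k := rfl
      rw [heq]
      linarith
    have hbx : ⟪b, x⟫_ℝ = g ⬝ᵥ ν - c * t := by
      rw [hinner]
      simp only [hb, Sum.elim_inl, Sum.elim_inr]
      have : g ⬝ᵥ ν = ∑ k : Fin n, g k * ν k := rfl
      rw [this]
      ring
    rw [hbx]
    rcases eq_or_lt_of_le hxt with ht0 | htpos
    · -- t = 0 : recession direction
      obtain ⟨ν₀, hν₀⟩ := hne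
      have hrec : ∀ s : ℝ, 0 ≤ s → g ⬝ᵥ ν₀ + s * (g ⬝ᵥ ν) ≤ c := by
        intro s hs
        have hfeas : F.mulVec (ν₀ + s • ν) ≤ f := by
          intro i
          have h1 : F.mulVec (ν₀ + s • ν) i = F.mulVec ν₀ i + s * F.mulVec ν i := by
            rw [Matrix.mulVec_add, Matrix.mulVec_smul]
            simp
          rw [h1]
          have h2 := hFν i
          rw [← ht0, mul_zero] at h2
          nlinarith [hν₀ i, mul_nonpos_of_nonneg_of_nonpos hs h2]
        have h3 := H _ hfeas
        rw [dotProduct_add, dotProduct_smul] at h3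
        simpa [smul_eq_mul] using h3
      by_contra hcon
      push_neg at hcon
      rw [← ht0, mul_zero, sub_zero] at hcon
      set q := g ⬝ᵥ ν with hq
      set d := g ⬝ᵥ ν₀ with hd
      have hqpos : 0 < q := hcon
      set s := max 0 ((c - d) / q) + 1 with hs
      have hs0 : 0 ≤ s := by
        have := le_max_left 0 ((c - d) / q)
        simp [hs]; linarith
      have hbig := hrec s hs0
      have h7 : (c - d) / q * q = c - d := div_mul_cancel₀ _ (ne_of_gt hqpos)
      have h8 : (c - d) / q ≤ max 0 ((c - d) / q) := le_max_right _ _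
      rw [hs] at hbig
      nlinarith [mul_le_mul_of_nonneg_right h8 hqpos.le]
    · -- t > 0 : scale
      have hfeas : F.mulVec (t⁻¹ • ν) ≤ f := by
        intro i
        rw [Matrix.mulVec_smul]
        have h2 : t⁻¹ * F.mulVec ν i ≤ t⁻¹ * (f i * t) :=
          mul_le_mul_of_nonneg_left (hFν i) (inv_nonneg.mpr hxt)
        have h3 : t⁻¹ * (f i * t) = f i := by field_simp
        calc (t⁻¹ • F.mulVec ν) i = t⁻¹ * F.mulVec ν i := rfl
          _ ≤ f i := h2.trans_eq h3
      have h4 := H _ hfeas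
      rw [dotProduct_smul] at h4
      have h5 := mul_le_mul_of_nonneg_left h4 (le_of_lt htpos)
      rw [smul_eq_mul, ← mul_assoc, mul_inv_cancel₀ (ne_of_gt htpos), one_mul] at h5
      linarith
  obtain ⟨z', hz', hbz⟩ := farkas_cone v b key
  refine ⟨fun i => z' (Sum.inl i), fun i => hz' _, ?_, ?_⟩
  · have h9 := congrArg (fun x => x (Sum.inr ())) hbz
    rw [eucl_sum_apply] at h9
    rw [Fintype.sum_sum_type] at h9
    simp only [hv, hb, Sum.elim_inl, Sum.elim_inr] at h9
    simp at h9
    have : f ⬝ᵥ (fun i => z' (Sum.inl i)) = ∑ i : Fin p, z' (Sum.inl i) * f i := by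
      simp [dotProduct, mul_comm]
    rw [this]
    have h10 : 0 ≤ z' (Sum.inr ()) := hz' _
    have : ∑ i : Fin p, z' (Sum.inl i) * f i = c - z' (Sum.inr ()) := by linarith [h9]
    linarith
  · intro k
    have h9 := congrArg (fun x => x (Sum.inl k)) hbz
    rw [eucl_sum_apply] at h9
    rw [Fintype.sum_sum_type] at h9
    simp only [hv, hb, Sum.elim_inl, Sum.elim_inr] at h9
    simpa using h9

end AffineFarkas


theorem stmt_17 (m n p : ℕ)
    (G : Matrix (Fin m) (Fin n) ℝ) (F : Matrix (Fin p) (Fin n) ℝ)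
    (h : Fin m → ℝ) (f : Fin p → ℝ)
    (hne : {ν : Fin n → ℝ | F.mulVec ν ≤ f}.Nonempty)
    (hbdd : Bornology.IsBounded {ν : Fin n → ℝ | F.mulVec ν ≤ f}) :
    (∀ ν : Fin n → ℝ, F.mulVec ν ≤ f → G.mulVec ν ≤ h) ↔
      ∃ Z : Matrix (Fin p) (Fin m) ℝ,
        (∀ i j, 0 ≤ Z i j) ∧ Zᵀ.mulVec f ≤ h ∧ G = Zᵀ * F := by
  constructor
  · intro H
    have hfeas : ∃ ν : Fin n → ℝ, F.mulVec ν ≤ f := hne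
    have hrow : ∀ j : Fin m, ∃ z : Fin p → ℝ, (∀ i, 0 ≤ z i) ∧ f ⬝ᵥ z ≤ h j ∧
        ∀ k, G j k = ∑ i, z i * F i k := fun j =>
      affine_farkas F f (fun k => G j k) (h j) hfeas (fun ν hν => H ν hν j)
    choose z hz1 hz2 hz3 using hrow
    refine ⟨Matrix.of (fun i j => z j i), fun i j => hz1 j i, ?_, ?_⟩
    · intro j
      have heq : (Matrix.of (fun i j => z j i))ᵀ.mulVec f j = f ⬝ᵥ z j := by
        simp [Matrix.mulVec, dotProduct, Matrix.transpose_apply, mul_comm]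
      rw [heq]
      exact hz2 j
    · ext j k
      rw [hz3 j k]
      simp [Matrix.mul_apply, Matrix.transpose_apply, Matrix.of_apply]
  · rintro ⟨Z, hZ, hZf, rfl⟩ ν hν j
    have h1 : (Zᵀ * F).mulVec ν j = Zᵀ.mulVec (F.mulVec ν) j := by
      rw [Matrix.mulVec_mulVec]
    rw [h1]
    have h2 : Zᵀ.mulVec (F.mulVec ν) j ≤ Zᵀ.mulVec f j := by
      simp only [Matrix.mulVec, dotProduct, Matrix.transpose_apply]
      exact Finset.sum_le_sum fun i _ => mul_le_mul_of_nonneg_left (hν i) (hZ i j)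
    exact h2.trans (hZf j)
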